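/- Let M ∈ M(2n−1,ℝ) and suppose the almost abelian Lie algebra 𝔤_M = ℝe₀ ⋉_M ℝ^{2n−1} admits a complex structure. Then there exists exactly one real eigenvalue a of M whose algebraic multiplicity m_a = dim ker((M − aI_{2n−1})^{2n−1}) is odd; in particular, M has at least one real eigenvalue. -/

import Mathlib

open Matrix Module

noncomputable section

/-- The `n × n` real nilpotent Jordan block `𝒥ₙ`, with `1`s on the subdiagonal
and `0`s elsewhere. -/
def jordanBlock (n : ℕ) : Matrix (Fin n) (Fin n) ℝ :=
  Matrix.of fun i j => if (i : ℕ) = (j : ℕ) + 1 then 1 else 0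

/-- Two square real matrices with the same index type are conjugate:
`B = P * A * P⁻¹` for some invertible `P`. -/
def MatConj {ι : Type*} [Fintype ι] [DecidableEq ι] (A B : Matrix ι ι ℝ) : Prop :=
  ∃ P : Matrix ι ι ℝ, IsUnit P ∧ B = P * A * P⁻¹

/-- Conjugacy of square real matrices indexed by possibly different (equipotent)
index types: after relabelling the rows/columns of `A` by a bijection, the two
matrices are conjugate. -/
def MatConj' {ι κ : Type*} [Fintype ι] [DecidableEq ι] [Fintype κ] [DecidableEq κ]
    (A : Matrix ι ι ℝ) (B : Matrix κ κ ℝ) : Prop :=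
  ∃ e : ι ≃ κ, MatConj (Matrix.reindex e e A) B

/-- The Lie bracket of the almost abelian Lie algebra `𝔤_A = ℝe₀ ⋉_A ℝ^ι`, on the
underlying vector space `ℝ × (ι → ℝ)`:  `[(t,v),(s,w)] = (0, t • A w − s • A v)`. -/
def aaBracket {ι : Type*} [Fintype ι] (A : Matrix ι ι ℝ) :
    ℝ × (ι → ℝ) → ℝ × (ι → ℝ) → ℝ × (ι → ℝ) :=
  fun x y => (0, x.1 • A.mulVec y.2 - y.1 • A.mulVec x.2)

/-- The almost abelian Lie algebra `𝔤_A` admits a complex structure: a linear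
endomorphism `j` with `j² = -id` whose Nijenhuis tensor vanishes. -/
def HasComplexStructure {ι : Type*} [Fintype ι] (A : Matrix ι ι ℝ) : Prop :=
  ∃ j : (ℝ × (ι → ℝ)) →ₗ[ℝ] ℝ × (ι → ℝ),
    (∀ x, j (j x) = -x) ∧
    (∀ x y, aaBracket A x y + j (aaBracket A (j x) y + aaBracket A x (j y))
        - aaBracket A (j x) (j y) = 0)

/-- The almost abelian Lie algebra `𝔤_A` admits a symplectic structure: a
non-degenerate alternating bilinear form which is closed. -/
def HasSymplecticStructure {ι : Type*} [Fintype ι] (A : Matrix ι ι ℝ) : Prop :=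
  ∃ ω : (ℝ × (ι → ℝ)) →ₗ[ℝ] (ℝ × (ι → ℝ)) →ₗ[ℝ] ℝ,
    (∀ x, ω x x = 0) ∧
    (∀ x, (∀ y, ω x y = 0) → x = 0) ∧
    (∀ x y z, ω (aaBracket A x y) z + ω (aaBracket A y z) x + ω (aaBracket A z x) y = 0)

lemma even_finrank_of_conj {V : Type*} [AddCommGroup V] [Module ℝ V]
    [FiniteDimensional ℝ V] (J : V →ₗ[ℝ] V) (hJ : ∀ x, J (J x) = -x) :
    Even (finrank ℝ V) := by
  by_contra h
  rw [Nat.not_even_iff_odd] at h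
  have h1 : J ∘ₗ J = (-1 : ℝ) • LinearMap.id := by ext x; simp [hJ]
  have h2 : LinearMap.det J * LinearMap.det J = (-1 : ℝ) ^ finrank ℝ V := by
    rw [← LinearMap.det_comp, h1, LinearMap.det_smul, LinearMap.det_id, mul_one]
  rw [h.neg_one_pow] at h2
  nlinarith [h2]

lemma mulVecLin_sub' {n : ℕ} (M N : Matrix (Fin n) (Fin n) ℝ) :
    (M - N).mulVecLin = M.mulVecLin - N.mulVecLin := by
  ext v i; simp [Matrix.mulVecLin_apply, Matrix.sub_mulVec]

lemma mulVecLin_smul' {n : ℕ} (c : ℝ) (M : Matrix (Fin n) (Fin n) ℝ) :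
    (c • M).mulVecLin = c • M.mulVecLin := by
  ext v i; simp [Matrix.mulVecLin_apply, Matrix.smul_mulVec]

lemma mulVecLin_pow' {n : ℕ} (M : Matrix (Fin n) (Fin n) ℝ) (l : ℝ) (k : ℕ) :
    Matrix.mulVecLin ((M - l • 1) ^ k)
      = (M.mulVecLin - l • LinearMap.id) ^ k := by
  induction k with
  | zero => rw [pow_zero, pow_zero, Matrix.mulVecLin_one]; rfl
  | succ k ih =>
      rw [pow_succ, pow_succ, Matrix.mulVecLin_mul, ih,
        mulVecLin_sub', mulVecLin_smul', Matrix.mulVecLin_one]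
      rfl

lemma stmt17_aux (d : ℕ) (M : Matrix (Fin d) (Fin d) ℝ)
    (hc : HasComplexStructure M) :
    ∃! a : ℝ,
      (M - a • (1 : Matrix (Fin d) (Fin d) ℝ)).det = 0 ∧
      Odd (Module.finrank ℝ
        (LinearMap.ker (Matrix.mulVecLin
          ((M - a • (1 : Matrix (Fin d) (Fin d) ℝ)) ^ d)))) := by
  classical
  obtain ⟨j, hj2, hN⟩ := hc
  -- d is odd
  have hdodd : Odd d := by
    have hV : Even (finrank ℝ (ℝ × (Fin d → ℝ))) := even_finrank_of_conj j hj2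
    rw [Module.finrank_prod, Module.finrank_self, Module.finrank_fin_fun] at hV
    rcases Nat.even_or_odd d with h | h
    · exfalso
      have : Odd (1 + d) := by rw [add_comm]; exact Even.add_one h
      exact (Nat.not_even_iff_odd.mpr this) hV
    · exact h
  have hd1 : 1 ≤ d := hdodd.pos
  have hfr : finrank ℝ (Fin d → ℝ) = d := Module.finrank_fin_fun ℝ
  set A : (Fin d → ℝ) →ₗ[ℝ] (Fin d → ℝ) := M.mulVecLin with hA_def
  set φ : (Fin d → ℝ) →ₗ[ℝ] ℝ :=
    (LinearMap.fst ℝ ℝ (Fin d → ℝ)) ∘ₗ j ∘ₗ (LinearMap.inr ℝ ℝ (Fin d → ℝ)) with hφ_def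
  set ψ : (Fin d → ℝ) →ₗ[ℝ] (Fin d → ℝ) :=
    (LinearMap.snd ℝ ℝ (Fin d → ℝ)) ∘ₗ j ∘ₗ (LinearMap.inr ℝ ℝ (Fin d → ℝ)) with hψ_def
  have hj0 : ∀ x : Fin d → ℝ, j (0, x) = (φ x, ψ x) := fun x => rfl
  -- square identities on ker φ
  have hsq : ∀ x : Fin d → ℝ, φ x = 0 → φ (ψ x) = 0 ∧ ψ (ψ x) = -x := by
    intro x hx
    have h := hj2 (0, x)
    rw [hj0 x, hx, hj0 (ψ x)] at h
    constructor
    · simpa using congrArg Prod.fst h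
    · simpa using congrArg Prod.snd h
  -- φ is nonzero
  have hφne : ∃ y, φ y ≠ 0 := by
    by_contra hno
    push_neg at hno
    have : Even (finrank ℝ (Fin d → ℝ)) :=
      even_finrank_of_conj ψ (fun x => (hsq x (hno x)).2)
    rw [Module.finrank_fin_fun] at this
    exact (Nat.not_even_iff_odd.mpr hdodd) this
  obtain ⟨y, hy⟩ := hφne
  set y' : Fin d → ℝ := (φ y)⁻¹ • y with hy'_def
  have hφy' : φ y' = 1 := by
    rw [hy'_def, LinearMap.map_smul, smul_eq_mul, inv_mul_cancel₀ hy]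
  -- key Nijenhuis consequence
  have hkey : ∀ x : Fin d → ℝ, φ x = 0 → φ (A x) = 0 ∧ ψ (A x) = A (ψ x) := by
    intro x hx
    have hNx := hN (0, x) (0, y')
    have e1 : j (0, x) = (0, ψ x) := by rw [hj0, hx]
    have e2 : j (0, y') = (1, ψ y') := by rw [hj0, hφy']
    simp only [aaBracket, e1, e2] at hNx
    simp only [zero_smul, one_smul, smul_zero, sub_zero, zero_sub, sub_self] at hNx
    rw [Prod.mk_zero_zero, zero_add, zero_add, sub_eq_zero, hj0] at hNx
    rw [map_neg, map_neg, Prod.mk.injEq] at hNx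
    obtain ⟨h1, h2⟩ := hNx
    constructor
    · have h3 : φ (M *ᵥ x) = 0 := neg_eq_zero.mp h1
      simpa [hA_def, Matrix.mulVecLin_apply] using h3
    · have h3 : ψ (M *ᵥ x) = M *ᵥ ψ x := neg_inj.mp h2
      simpa [hA_def, Matrix.mulVecLin_apply] using h3
  -- the distinguished eigenvalue
  set a : ℝ := φ (A y') with ha_def
  have hφA : ∀ x, φ (A x) = a * φ x := by
    intro x
    have hx0 : φ (x - φ x • y') = 0 := by
      rw [map_sub, LinearMap.map_smul, hφy', smul_eq_mul, mul_one, sub_self]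
    have h := (hkey _ hx0).1
    rw [map_sub, LinearMap.map_smul, map_sub, LinearMap.map_smul, smul_eq_mul,
      sub_eq_zero] at h
    rw [h, mul_comm]
  set Q : ℝ → ((Fin d → ℝ) →ₗ[ℝ] (Fin d → ℝ)) :=
    (fun l => A - l • LinearMap.id) with hQ_def
  have hQ : ∀ l : ℝ, Q l = M.mulVecLin - l • LinearMap.id := fun l => rfl
  have hφq : ∀ (l : ℝ) x, φ ((Q l) x) = (a - l) * φ x := by
    intro l x
    rw [hQ_def]
    simp only [LinearMap.sub_apply, LinearMap.smul_apply, LinearMap.id_apply]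
    rw [map_sub, LinearMap.map_smul, hφA, smul_eq_mul]
    ring
  have hφqpow : ∀ (l : ℝ) (k : ℕ) x,
      φ (((Q l) ^ k) x) = (a - l) ^ k * φ x := by
    intro l k
    induction k with
    | zero => intro x; simp
    | succ k ih =>
        intro x
        rw [pow_succ', Module.End.mul_apply, hφq, ih, pow_succ']
        ring
  have hkerq : ∀ (l : ℝ) (k : ℕ) x, φ x = 0 →
      φ (((Q l) ^ k) x) = 0 ∧
      ψ (((Q l) ^ k) x) = ((Q l) ^ k) (ψ x) := by
    intro l k
    induction k with
    | zero => intro x hx; simp [hx]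
    | succ k ih =>
        intro x hx
        obtain ⟨h1, h2⟩ := ih x hx
        have hz := hkey _ h1
        constructor
        · have hQapp : ∀ z, (Q l) z = A z - l • z := fun z => rfl
          rw [pow_succ', Module.End.mul_apply, hQapp, map_sub, LinearMap.map_smul,
            hz.1, h1, smul_zero, sub_zero]
        · have h4 : ψ ((Q l) (((Q l) ^ k) x))
              = (Q l) (ψ (((Q l) ^ k) x)) := by
            rw [LinearMap.sub_apply, LinearMap.smul_apply, LinearMap.id_apply,
              map_sub, LinearMap.map_smul, hz.2, LinearMap.sub_apply,
              LinearMap.smul_apply, LinearMap.id_apply]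
          rw [pow_succ', Module.End.mul_apply, h4, h2]
          exact (Module.End.mul_apply _ _ _).symm
  -- evenness inside ker φ
  have hKeven : ∀ l : ℝ,
      Even (finrank ℝ ↥(LinearMap.ker ((Q l) ^ d) ⊓ LinearMap.ker φ)) := by
    intro l
    have hres : ∀ x ∈ (LinearMap.ker ((Q l) ^ d) ⊓ LinearMap.ker φ),
        ψ x ∈ (LinearMap.ker ((Q l) ^ d) ⊓ LinearMap.ker φ) := by
      intro x hxS
      obtain ⟨hx1, hx2⟩ := Submodule.mem_inf.mp hxS
      rw [LinearMap.mem_ker] at hx1 hx2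
      refine Submodule.mem_inf.mpr ⟨?_, ?_⟩
      · rw [LinearMap.mem_ker, ← (hkerq l d x hx2).2, hx1, map_zero]
      · rw [LinearMap.mem_ker]; exact (hsq x hx2).1
    refine even_finrank_of_conj (ψ.restrict hres) (fun s => ?_)
    apply Subtype.ext
    rw [LinearMap.restrict_coe_apply, LinearMap.restrict_coe_apply]
    have hx2 : φ (s : Fin d → ℝ) = 0 := by
      have h := (Submodule.mem_inf.mp s.2).2
      rwa [LinearMap.mem_ker] at h
    exact (hsq _ hx2).2
  -- off-a kernels live in ker φ
  have hKle : ∀ l : ℝ, l ≠ a →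
      LinearMap.ker ((Q l) ^ d) ≤ LinearMap.ker φ := by
    intro l hl x hx
    rw [LinearMap.mem_ker] at hx ⊢
    have h := hφqpow l d x
    rw [hx, map_zero] at h
    have hne : (a - l) ^ d ≠ 0 := pow_ne_zero _ (sub_ne_zero.mpr (Ne.symm hl))
    rcases mul_eq_zero.mp h.symm with h' | h'
    · exact absurd h' hne
    · exact h'
  -- existence of a kernel vector outside ker φ
  have hx0 : ∃ x₀, x₀ ∈ LinearMap.ker ((Q a) ^ d) ∧ φ x₀ ≠ 0 := by
    by_contra hcon
    push_neg at hcon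
    have hkle : LinearMap.ker ((Q a) ^ d) ≤ LinearMap.ker φ :=
      fun x hx => LinearMap.mem_ker.mpr (hcon x hx)
    have hrle : LinearMap.range ((Q a) ^ d) ≤ LinearMap.ker φ := by
      rintro x ⟨z, rfl⟩
      rw [LinearMap.mem_ker, hφqpow, sub_self, zero_pow (by omega), zero_mul]
    have hkk : LinearMap.ker ((Q a) ^ (d + d))
        = LinearMap.ker ((Q a) ^ d) := by
      have h1 := Module.End.ker_pow_eq_ker_pow_finrank_of_le
        (f := A - a • LinearMap.id) (m := d + d) (by rw [hfr]; omega)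
      have h2 := Module.End.ker_pow_eq_ker_pow_finrank_of_le
        (f := A - a • LinearMap.id) (m := d) (by rw [hfr])
      rw [h1, h2]
    have hdisj : Disjoint (LinearMap.ker ((Q a) ^ d))
        (LinearMap.range ((Q a) ^ d)) := by
      rw [Submodule.disjoint_def]
      rintro x hxk ⟨z, rfl⟩
      have h2d : ((Q a) ^ (d + d)) z = 0 := by
        rw [pow_add, Module.End.mul_apply]
        exact LinearMap.mem_ker.mp hxk
      have hz : z ∈ LinearMap.ker ((Q a) ^ d) := by
        rw [← hkk]; exact LinearMap.mem_ker.mpr h2d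
      exact LinearMap.mem_ker.mp hz
    have hsum := Submodule.finrank_sup_add_finrank_inf_eq
      (LinearMap.ker ((Q a) ^ d))
      (LinearMap.range ((Q a) ^ d))
    rw [hdisj.eq_bot, finrank_bot, add_zero] at hsum
    have hrn := LinearMap.finrank_range_add_finrank_ker ((Q a) ^ d)
    have htop : LinearMap.ker ((Q a) ^ d)
        ⊔ LinearMap.range ((Q a) ^ d) = ⊤ := by
      apply Submodule.eq_top_of_finrank_eq
      rw [hsum, hfr]
      rw [hfr] at hrn
      omega
    have hmem : y' ∈ LinearMap.ker φ := by
      have h := Submodule.mem_top (R := ℝ) (x := y')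
      rw [← htop] at h
      exact (sup_le hkle hrle) h
    rw [LinearMap.mem_ker] at hmem
    rw [hmem] at hφy'
    norm_num at hφy'
  obtain ⟨x₀, hx₀K, hx₀φ⟩ := hx0
  have hx₀0 : x₀ ≠ 0 := fun h => hx₀φ (by rw [h, map_zero])
  have hspan : LinearMap.ker ((Q a) ^ d)
      = (LinearMap.ker ((Q a) ^ d) ⊓ LinearMap.ker φ)
        ⊔ Submodule.span ℝ {x₀} := by
    apply le_antisymm
    · intro x hx
      have hmem : x - (φ x / φ x₀) • x₀
          ∈ LinearMap.ker ((Q a) ^ d) ⊓ LinearMap.ker φ := by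
        refine Submodule.mem_inf.mpr ⟨?_, ?_⟩
        · exact Submodule.sub_mem _ hx (Submodule.smul_mem _ _ hx₀K)
        · rw [LinearMap.mem_ker, map_sub, LinearMap.map_smul, smul_eq_mul]
          field_simp
          ring
      have hxeq : x = (x - (φ x / φ x₀) • x₀) + (φ x / φ x₀) • x₀ := by
        rw [sub_add_cancel]
      rw [hxeq]
      exact Submodule.add_mem _ (Submodule.mem_sup_left hmem)
        (Submodule.mem_sup_right
          (Submodule.smul_mem _ _ (Submodule.mem_span_singleton_self x₀)))
    · exact sup_le inf_le_left (Submodule.span_le.mpr (by simpa using hx₀K))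
  have hdisj2 : Disjoint
      (LinearMap.ker ((Q a) ^ d) ⊓ LinearMap.ker φ)
      (Submodule.span ℝ {x₀}) := by
    rw [Submodule.disjoint_def]
    intro x hx1 hx2
    obtain ⟨c, rfl⟩ := Submodule.mem_span_singleton.mp hx2
    have h := (Submodule.mem_inf.mp hx1).2
    rw [LinearMap.mem_ker, LinearMap.map_smul, smul_eq_mul] at h
    rcases mul_eq_zero.mp h with h' | h'
    · rw [h', zero_smul]
    · exact absurd h' hx₀φ
  have hfin : finrank ℝ ↥(LinearMap.ker ((Q a) ^ d))
      = finrank ℝ ↥(LinearMap.ker ((Q a) ^ d) ⊓ LinearMap.ker φ) + 1 := by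
    have h := Submodule.finrank_sup_add_finrank_inf_eq
      (LinearMap.ker ((Q a) ^ d) ⊓ LinearMap.ker φ)
      (Submodule.span ℝ {x₀})
    rw [hdisj2.eq_bot, finrank_bot, add_zero, finrank_span_singleton hx₀0] at h
    conv_lhs => rw [hspan]
    exact h
  have hKaodd : Odd (finrank ℝ ↥(LinearMap.ker ((Q a) ^ d))) := by
    rw [hfin]; exact (hKeven a).add_one
  -- det at a
  have hdeta : (M - a • (1 : Matrix (Fin d) (Fin d) ℝ)).det = 0 := by
    have hker1 : ∃ v, v ≠ 0 ∧ (Q a) v = 0 := by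
      have haux : ∀ (m : ℕ) (x : Fin d → ℝ), x ≠ 0 →
          ((Q a) ^ m) x = 0 →
          ∃ v, v ≠ 0 ∧ (Q a) v = 0 := by
        intro m
        induction m with
        | zero => intro x hx h; exact absurd (by simpa using h) hx
        | succ m ih =>
            intro x hx h
            by_cases h0 : (Q a) x = 0
            · exact ⟨x, hx, h0⟩
            · refine ih ((Q a) x) h0 ?_
              rw [← Module.End.mul_apply, ← pow_succ]
              exact h
      exact haux d x₀ hx₀0 (LinearMap.mem_ker.mp hx₀K)
    obtain ⟨v, hv, hqv⟩ := hker1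
    rw [← Matrix.exists_mulVec_eq_zero_iff]
    refine ⟨v, hv, ?_⟩
    have h : (M - a • (1 : Matrix (Fin d) (Fin d) ℝ)).mulVecLin v = 0 := by
      rw [mulVecLin_sub', mulVecLin_smul', Matrix.mulVecLin_one]
      exact hqv
    simpa only [Matrix.mulVecLin_apply] using h
  -- conclusion
  refine ⟨a, ⟨hdeta, ?_⟩, ?_⟩
  · rw [mulVecLin_pow', ← hQ]
    exact hKaodd
  · rintro b ⟨hbdet, hbodd⟩
    by_contra hba
    rw [mulVecLin_pow', ← hQ] at hbodd
    have heq : LinearMap.ker ((Q b) ^ d) ⊓ LinearMap.ker φ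
        = LinearMap.ker ((Q b) ^ d) :=
      inf_eq_left.mpr (hKle b hba)
    have hev := hKeven b
    rw [heq] at hev
    exact (Nat.not_even_iff_odd.mpr hbodd) hev

/-- If `𝔤_M` admits a complex structure (`M ∈ M(2n-1,ℝ)`), then
there is exactly one real eigenvalue `a` of `M` whose algebraic multiplicity
`m_a = dim ker((M - aI)^{2n-1})` is odd; in particular `M` has a real
eigenvalue. -/
theorem stmt17 (n : ℕ)
    (M : Matrix (Fin (2 * n - 1)) (Fin (2 * n - 1)) ℝ)
    (hc : HasComplexStructure M) :
    ∃! a : ℝ,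
      (M - a • (1 : Matrix (Fin (2 * n - 1)) (Fin (2 * n - 1)) ℝ)).det = 0 ∧
      Odd (Module.finrank ℝ
        (LinearMap.ker (Matrix.mulVecLin
          ((M - a • (1 : Matrix (Fin (2 * n - 1)) (Fin (2 * n - 1)) ℝ)) ^ (2 * n - 1))))) :=
  stmt17_aux (2 * n - 1) M hc
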